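/- For p > 1 with Hölder conjugate q = p/(p−1), and G connected with at least one edge: λ_p(G) ≤ 2^{p-1}·max_{{i,j}∈E} ((d_i^q + d_j^q)/2)^{1/q}, with equality if and only if G is regular. -/

import Mathlib

open Finset

variable {V : Type*}

/-- Signless p-Laplacian form: `Q_p(x) = Σ_{{i,j}∈E} |x_i + x_j|^p`. -/
noncomputable def Qp [Fintype V] (G : SimpleGraph V) [Fintype G.edgeSet] (p : ℝ)
    (x : V → ℝ) : ℝ :=
  ∑ e ∈ G.edgeFinset,
    Sym2.lift ⟨fun i j => |x i + x j| ^ p, fun i j => by simp [add_comm]⟩ e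

/-- The p-norm unit sphere condition. -/
def unitSphere [Fintype V] (p : ℝ) (x : V → ℝ) : Prop := ∑ i, |x i| ^ p = 1

/-- Smallest signless p-Laplacian eigenvalue. -/
noncomputable def qp [Fintype V] (G : SimpleGraph V) [Fintype G.edgeSet] (p : ℝ) : ℝ :=
  sInf {r | ∃ x : V → ℝ, unitSphere p x ∧ Qp G p x = r}

/-- Largest signless p-Laplacian eigenvalue. -/
noncomputable def lamp [Fintype V] (G : SimpleGraph V) [Fintype G.edgeSet] (p : ℝ) : ℝ :=
  sSup {r | ∃ x : V → ℝ, unitSphere p x ∧ Qp G p x = r}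

open Classical in
/-- Number of edges with both endpoints in `S`. -/
noncomputable def eIn [Fintype V] (G : SimpleGraph V) [Fintype G.edgeSet] (S : Finset V) : ℕ :=
  (G.edgeFinset.filter fun e => ∀ v ∈ e, v ∈ S).card

open Classical in
/-- Number of edges with exactly one endpoint in `U`. -/
noncomputable def cutN [Fintype V] (G : SimpleGraph V) [Fintype G.edgeSet] (U : Finset V) : ℕ :=
  (G.edgeFinset.filter fun e => (∃ v ∈ e, v ∈ U) ∧ (∃ w ∈ e, w ∉ U)).card

/-- Desai–Rao bipartiteness parameter ψ(G). -/
noncomputable def psi [Fintype V] [DecidableEq V] (G : SimpleGraph V) [Fintype G.edgeSet] : ℝ :=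
  sInf {r | ∃ S T : Finset V, Disjoint S T ∧ (S ∪ T).Nonempty ∧
    r = (2 * eIn G S + 2 * eIn G T + cutN G (S ∪ T)) / (S ∪ T).card}

open Classical in
/-- `h_g(U)`: min over thresholds `0 ≤ t < max g` of `cut(C_t)/|C_t|` where `C_t = {i : g i > t}`. -/
noncomputable def hgC [Fintype V] [DecidableEq V] (G : SimpleGraph V) [Fintype G.edgeSet]
    (g : V → ℝ) : ℝ :=
  sInf {r | ∃ t : ℝ, 0 ≤ t ∧ t < sSup (Set.range g) ∧
    r = (cutN G (univ.filter fun i => t < g i) : ℝ) / (univ.filter fun i => t < g i).card}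

/-- Eigenpair of the signless p-Laplacian. -/
def IsEigenpair [Fintype V] (G : SimpleGraph V) [DecidableRel G.Adj] (p : ℝ)
    (x : V → ℝ) (μ : ℝ) : Prop :=
  ∀ k, ∑ j ∈ G.neighborFinset k, Real.sign (x k + x j) * |x k + x j| ^ (p - 1)
      = μ * (Real.sign (x k) * |x k| ^ (p - 1))

/-- Vertex bipartiteness: minimum number of vertices to delete to make `G` bipartite. -/
noncomputable def nuG [Fintype V] [DecidableEq V] (G : SimpleGraph V) : ℕ :=
  sInf {k | ∃ S : Finset V, S.card = k ∧ ((SimpleGraph.induce ((↑S : Set V)ᶜ) G).Colorable 2)}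


section Aux

variable {p : ℝ}

/-- two-point convexity -/
lemma two_point (hp : 1 < p) {a b w₁ w₂ : ℝ} (ha : 0 ≤ a) (hb : 0 ≤ b)
    (h1 : 0 < w₁) (h2 : 0 < w₂) (hw : w₁ + w₂ = 1) :
    (a + b) ^ p ≤ w₁ * (a / w₁) ^ p + w₂ * (b / w₂) ^ p := by
  have h := (convexOn_rpow hp.le).2 (Set.mem_Ici.2 (div_nonneg ha h1.le))
    (Set.mem_Ici.2 (div_nonneg hb h2.le)) h1.le h2.le hw
  simpa [smul_eq_mul, mul_div_cancel₀, h1.ne', h2.ne'] using h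

lemma two_point_strict (hp : 1 < p) {a b w₁ w₂ : ℝ} (ha : 0 ≤ a) (hb : 0 ≤ b)
    (h1 : 0 < w₁) (h2 : 0 < w₂) (hw : w₁ + w₂ = 1) (hne : a / w₁ ≠ b / w₂) :
    (a + b) ^ p < w₁ * (a / w₁) ^ p + w₂ * (b / w₂) ^ p := by
  have h := (strictConvexOn_rpow hp).2 (Set.mem_Ici.2 (div_nonneg ha h1.le))
    (Set.mem_Ici.2 (div_nonneg hb h2.le)) hne h1 h2 hw
  simpa [smul_eq_mul, mul_div_cancel₀, h1.ne', h2.ne'] using h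

lemma s_mul (hp : 1 < p) : 1/(p-1) * (p-1) = 1 := by
  have : p - 1 ≠ 0 := by linarith
  field_simp

lemma mul_div_rpow {a w : ℝ} (ha : 0 ≤ a) (hw : 0 < w) :
    w * (a/w) ^ p = a ^ p / w ^ (p-1) := by
  rw [Real.div_rpow ha hw.le]
  have h : w ^ p = w ^ (p-1) * w := by
    rw [← Real.rpow_add_one hw.ne']; ring_nf
  have h2 : w ^ (p-1) ≠ 0 := (Real.rpow_pos_of_pos hw _).ne'
  rw [h]; field_simp

/-- weighted Hölder per edge -/
lemma edge_holder (hp : 1 < p) {a b c d : ℝ} (ha : 0 ≤ a) (hb : 0 ≤ b) (hc : 0 < c) (hd : 0 < d) :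
    (a + b) ^ p ≤ (c ^ (1/(p-1)) + d ^ (1/(p-1))) ^ (p-1) * (a ^ p / c + b ^ p / d) := by
  have hp1 : (0:ℝ) < p - 1 := by linarith
  set u := c ^ (1/(p-1)) with hu
  set v := d ^ (1/(p-1)) with hv
  have hu0 : 0 < u := Real.rpow_pos_of_pos hc _
  have hv0 : 0 < v := Real.rpow_pos_of_pos hd _
  have hS : 0 < u + v := by linarith
  have hw : u/(u+v) + v/(u+v) = 1 := by field_simp
  have h1 : 0 < u/(u+v) := div_pos hu0 hS
  have h2 : 0 < v/(u+v) := div_pos hv0 hS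
  have key := two_point hp ha hb h1 h2 hw
  have hup : u ^ (p-1) = c := by
    rw [hu, ← Real.rpow_mul hc.le, s_mul hp, Real.rpow_one]
  have hvp : v ^ (p-1) = d := by
    rw [hv, ← Real.rpow_mul hd.le, s_mul hp, Real.rpow_one]
  have hw1 : (u/(u+v)) ^ (p-1) = c / (u+v)^(p-1) := by
    rw [Real.div_rpow hu0.le hS.le, hup]
  have hw2 : (v/(u+v)) ^ (p-1) = d / (u+v)^(p-1) := by
    rw [Real.div_rpow hv0.le hS.le, hvp]
  have hSp : 0 < (u+v)^(p-1) := Real.rpow_pos_of_pos hS _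
  have e1 : u/(u+v) * (a / (u/(u+v))) ^ p = (u+v)^(p-1) * (a^p / c) := by
    rw [mul_div_rpow ha h1, hw1]
    field_simp
  have e2 : v/(u+v) * (b / (v/(u+v))) ^ p = (u+v)^(p-1) * (b^p / d) := by
    rw [mul_div_rpow hb h2, hw2]
    field_simp
  calc (a+b)^p ≤ _ := key
    _ = (u+v)^(p-1) * (a^p/c + b^p/d) := by rw [e1, e2]; ring

/-- strict version when one entry vanishes -/
lemma edge_holder_zero (hp : 1 < p) {b c d : ℝ} (hb : 0 < b) (hc : 0 < c) (hd : 0 < d) :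
    ((0:ℝ) + b) ^ p < (c ^ (1/(p-1)) + d ^ (1/(p-1))) ^ (p-1) * ((0:ℝ) ^ p / c + b ^ p / d) := by
  have hp1 : (0:ℝ) < p - 1 := by linarith
  have hu0 : 0 < c ^ (1/(p-1)) := Real.rpow_pos_of_pos hc _
  have hv0 : 0 < d ^ (1/(p-1)) := Real.rpow_pos_of_pos hd _
  have hvp : (d ^ (1/(p-1))) ^ (p-1) = d := by
    rw [← Real.rpow_mul hd.le, s_mul hp, Real.rpow_one]
  have hmono : d < (c ^ (1/(p-1)) + d ^ (1/(p-1))) ^ (p-1) := by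
    calc d = (d ^ (1/(p-1))) ^ (p-1) := hvp.symm
      _ < _ := Real.rpow_lt_rpow hv0.le (by linarith) hp1
  have h0 : (0:ℝ) ^ p = 0 := Real.zero_rpow (by positivity)
  rw [h0, zero_add]
  have hbp : 0 < b ^ p / d := div_pos (Real.rpow_pos_of_pos hb _) hd
  calc b ^ p = d * (b ^ p / d) := by field_simp
    _ < _ := by
        rw [zero_div, zero_add]
        exact (mul_lt_mul_iff_left₀ hbp).2 hmono

/-- power mean inequality M_{1/(p-1)} ≤ M_{p/(p-1)} -/
lemma pm (hp : 1 < p) {c d : ℝ} (hc : 0 < c) (hd : 0 < d) :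
    ((c ^ (1/(p-1)) + d ^ (1/(p-1)))/2) ^ (p-1)
      ≤ ((c ^ (p/(p-1)) + d ^ (p/(p-1)))/2) ^ ((p-1)/p) := by
  have hp0 : (0:ℝ) < p := by linarith
  have hp1 : (0:ℝ) < p - 1 := by linarith
  set u := c ^ (1/(p-1)) with hu
  set v := d ^ (1/(p-1)) with hv
  have hu0 : 0 < u := Real.rpow_pos_of_pos hc _
  have hv0 : 0 < v := Real.rpow_pos_of_pos hd _
  have hupp : u ^ p = c ^ (p/(p-1)) := by
    rw [hu, ← Real.rpow_mul hc.le]; ring_nf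
  have hvpp : v ^ p = d ^ (p/(p-1)) := by
    rw [hv, ← Real.rpow_mul hd.le]; ring_nf
  have key : ((u + v)/2) ^ p ≤ (c ^ (p/(p-1)) + d ^ (p/(p-1)))/2 := by
    have h := two_point hp (a := u/2) (b := v/2) (by positivity) (by positivity)
      (w₁ := 1/2) (w₂ := 1/2) (by norm_num) (by norm_num) (by norm_num)
    have e : u/2 + v/2 = (u+v)/2 := by ring
    rw [e] at h
    have e2 : u / 2 / (1/2 : ℝ) = u := by ring
    have e3 : v / 2 / (1/2 : ℝ) = v := by ring
    rw [e2, e3] at h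
    calc ((u+v)/2)^p ≤ 1/2 * u^p + 1/2 * v^p := h
      _ = (c ^ (p/(p-1)) + d ^ (p/(p-1)))/2 := by rw [hupp, hvpp]; ring
  calc ((u+v)/2) ^ (p-1) = (((u+v)/2) ^ p) ^ ((p-1)/p) := by
        rw [← Real.rpow_mul (by positivity)]
        congr 1; field_simp
    _ ≤ _ := Real.rpow_le_rpow (by positivity) key (by positivity)

lemma pm_strict (hp : 1 < p) {c d : ℝ} (hc : 0 < c) (hd : 0 < d) (hcd : c ≠ d) :
    ((c ^ (1/(p-1)) + d ^ (1/(p-1)))/2) ^ (p-1)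
      < ((c ^ (p/(p-1)) + d ^ (p/(p-1)))/2) ^ ((p-1)/p) := by
  have hp0 : (0:ℝ) < p := by linarith
  have hp1 : (0:ℝ) < p - 1 := by linarith
  set u := c ^ (1/(p-1)) with hu
  set v := d ^ (1/(p-1)) with hv
  have hu0 : 0 < u := Real.rpow_pos_of_pos hc _
  have hv0 : 0 < v := Real.rpow_pos_of_pos hd _
  have huv : u ≠ v := by
    intro h
    apply hcd
    have : u ^ (p-1) = v ^ (p-1) := by rw [h]
    rwa [hu, hv, ← Real.rpow_mul hc.le, ← Real.rpow_mul hd.le, s_mul hp,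
      Real.rpow_one, Real.rpow_one] at this
  have hupp : u ^ p = c ^ (p/(p-1)) := by
    rw [hu, ← Real.rpow_mul hc.le]; ring_nf
  have hvpp : v ^ p = d ^ (p/(p-1)) := by
    rw [hv, ← Real.rpow_mul hd.le]; ring_nf
  have key : ((u + v)/2) ^ p < (c ^ (p/(p-1)) + d ^ (p/(p-1)))/2 := by
    have h := two_point_strict hp (a := u/2) (b := v/2) (by positivity) (by positivity)
      (w₁ := 1/2) (w₂ := 1/2) (by norm_num) (by norm_num) (by norm_num)
      (by simpa [div_div_eq_mul_div] using (by
        intro hh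
        exact huv (by linarith [hh] )))
    have e : u/2 + v/2 = (u+v)/2 := by ring
    rw [e] at h
    have e2 : u / 2 / (1/2 : ℝ) = u := by ring
    have e3 : v / 2 / (1/2 : ℝ) = v := by ring
    rw [e2, e3] at h
    calc ((u+v)/2)^p < 1/2 * u^p + 1/2 * v^p := h
      _ = (c ^ (p/(p-1)) + d ^ (p/(p-1)))/2 := by rw [hupp, hvpp]; ring
  calc ((u+v)/2) ^ (p-1) = (((u+v)/2) ^ p) ^ ((p-1)/p) := by
        rw [← Real.rpow_mul (by positivity)]
        congr 1; field_simp
    _ < _ := Real.rpow_lt_rpow (by positivity) key (by positivity)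

lemma S_eq (hp : 1 < p) {c d : ℝ} (hc : 0 < c) (hd : 0 < d) :
    (c ^ (1/(p-1)) + d ^ (1/(p-1))) ^ (p-1)
      = 2 ^ (p-1) * ((c ^ (1/(p-1)) + d ^ (1/(p-1)))/2) ^ (p-1) := by
  have hu0 : 0 < c ^ (1/(p-1)) := Real.rpow_pos_of_pos hc _
  have hv0 : 0 < d ^ (1/(p-1)) := Real.rpow_pos_of_pos hd _
  rw [← Real.mul_rpow (by norm_num) (by positivity)]
  congr 1; ring

lemma S_le (hp : 1 < p) {c d M : ℝ} (hc : 0 < c) (hd : 0 < d)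
    (hM : ((c ^ (p/(p-1)) + d ^ (p/(p-1)))/2) ^ ((p-1)/p) ≤ M) :
    (c ^ (1/(p-1)) + d ^ (1/(p-1))) ^ (p-1) ≤ 2 ^ (p-1) * M := by
  rw [S_eq hp hc hd]
  have h2 : (0:ℝ) < (2:ℝ) ^ (p-1) := Real.rpow_pos_of_pos (by norm_num) _
  exact (mul_le_mul_iff_right₀ h2).2 ((pm hp hc hd).trans hM)

lemma S_lt (hp : 1 < p) {c d M : ℝ} (hc : 0 < c) (hd : 0 < d) (hcd : c ≠ d)
    (hM : ((c ^ (p/(p-1)) + d ^ (p/(p-1)))/2) ^ ((p-1)/p) ≤ M) :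
    (c ^ (1/(p-1)) + d ^ (1/(p-1))) ^ (p-1) < 2 ^ (p-1) * M := by
  rw [S_eq hp hc hd]
  have h2 : (0:ℝ) < (2:ℝ) ^ (p-1) := Real.rpow_pos_of_pos (by norm_num) _
  exact (mul_lt_mul_iff_right₀ h2).2 ((pm_strict hp hc hd hcd).trans_le hM)

lemma edge_bound (hp : 1 < p) {a b c d M : ℝ} (ha : 0 ≤ a) (hb : 0 ≤ b)
    (hc : 0 < c) (hd : 0 < d)
    (hM : ((c ^ (p/(p-1)) + d ^ (p/(p-1)))/2) ^ ((p-1)/p) ≤ M) :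
    (a + b) ^ p ≤ 2 ^ (p-1) * M * (a ^ p / c + b ^ p / d) := by
  have hm : 0 ≤ a ^ p / c + b ^ p / d := by positivity
  calc (a+b)^p ≤ (c ^ (1/(p-1)) + d ^ (1/(p-1))) ^ (p-1) * (a ^ p / c + b ^ p / d) :=
        edge_holder hp ha hb hc hd
    _ ≤ _ := mul_le_mul_of_nonneg_right (S_le hp hc hd hM) hm

lemma edge_bound_strict_ne (hp : 1 < p) {a b c d M : ℝ} (ha : 0 < a) (hb : 0 ≤ b)
    (hc : 0 < c) (hd : 0 < d) (hcd : c ≠ d)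
    (hM : ((c ^ (p/(p-1)) + d ^ (p/(p-1)))/2) ^ ((p-1)/p) ≤ M) :
    (a + b) ^ p < 2 ^ (p-1) * M * (a ^ p / c + b ^ p / d) := by
  have hm : 0 < a ^ p / c + b ^ p / d := by
    have : 0 < a ^ p / c := div_pos (Real.rpow_pos_of_pos ha _) hc
    have : 0 ≤ b ^ p / d := by positivity
    linarith
  calc (a+b)^p ≤ (c ^ (1/(p-1)) + d ^ (1/(p-1))) ^ (p-1) * (a ^ p / c + b ^ p / d) :=
        edge_holder hp ha.le hb hc hd
    _ < _ := (mul_lt_mul_iff_left₀ hm).2 (S_lt hp hc hd hcd hM)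

lemma edge_bound_strict_zero (hp : 1 < p) {b c d M : ℝ} (hb : 0 < b)
    (hc : 0 < c) (hd : 0 < d)
    (hM : ((c ^ (p/(p-1)) + d ^ (p/(p-1)))/2) ^ ((p-1)/p) ≤ M) :
    ((0:ℝ) + b) ^ p < 2 ^ (p-1) * M * ((0:ℝ) ^ p / c + b ^ p / d) := by
  have hm : 0 ≤ (0:ℝ) ^ p / c + b ^ p / d := by positivity
  calc ((0:ℝ)+b)^p < (c ^ (1/(p-1)) + d ^ (1/(p-1))) ^ (p-1) * ((0:ℝ) ^ p / c + b ^ p / d) :=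
        edge_holder_zero hp hb hc hd
    _ ≤ _ := mul_le_mul_of_nonneg_right (S_le hp hc hd hM) hm

variable {V : Type*}

lemma sum_edge_lift [Fintype V] [DecidableEq V] (G : SimpleGraph V) [DecidableRel G.Adj]
    (g : V → ℝ) :
    ∑ e ∈ G.edgeFinset,
      Sym2.lift ⟨fun i j => g i + g j, fun i j => by simp [add_comm]⟩ e
      = ∑ v, (G.degree v : ℝ) * g v := by
  have h1 : ∑ d : G.Dart, g d.fst
      = ∑ e ∈ G.edgeFinset,
          Sym2.lift ⟨fun i j => g i + g j, fun i j => by simp [add_comm]⟩ e := by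
    rw [← Finset.sum_fiberwise_of_maps_to
      (g := SimpleGraph.Dart.edge) (t := G.edgeFinset)
      (fun d _ => by rw [SimpleGraph.mem_edgeFinset]; exact d.edge_mem)]
    refine Finset.sum_congr rfl fun e he => ?_
    rw [SimpleGraph.mem_edgeFinset] at he
    induction e with
    | _ i j =>
      let d : G.Dart := ⟨(i, j), he⟩
      have hfib : (Finset.univ.filter fun d' : G.Dart => d'.edge = s(i,j))
          = {d, d.symm} := by
        have := d.edge_fiber
        exact this
      rw [hfib, Finset.sum_pair d.symm_ne.symm]
      simp only [Sym2.lift_mk]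
      rfl
  have h2 : ∑ d : G.Dart, g d.fst = ∑ v, (G.degree v : ℝ) * g v := by
    rw [← Finset.sum_fiberwise_of_maps_to
      (g := fun d : G.Dart => d.fst) (t := Finset.univ) (fun d _ => Finset.mem_univ _)]
    refine Finset.sum_congr rfl fun v _ => ?_
    have step : ∑ d ∈ Finset.univ.filter (fun d : G.Dart => d.fst = v), g d.fst
        = ∑ _d ∈ Finset.univ.filter (fun d : G.Dart => d.fst = v), g v := by
      refine Finset.sum_congr rfl fun d hd => ?_
      rw [Finset.mem_filter] at hd
      rw [hd.2]
    rw [step, Finset.sum_const, ← SimpleGraph.dart_fst_fiber_card_eq_degree]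
    simp [mul_comm]
  rw [← h1, h2]

lemma deg_pos [Fintype V] (G : SimpleGraph V) [DecidableRel G.Adj]
    (hc : G.Connected) (hE : ∃ a b, G.Adj a b) (v : V) : 0 < G.degree v := by
  obtain ⟨a, b, hab⟩ := hE
  rw [G.degree_pos_iff_exists_adj]
  obtain ⟨w⟩ := hc.preconnected v a
  cases w with
  | nil => exact ⟨b, hab⟩
  | cons h _ => exact ⟨_, h⟩

lemma degree_constant [Fintype V] (G : SimpleGraph V) [DecidableRel G.Adj]
    (h : ∀ u v, G.Adj u v → G.degree u = G.degree v) {u v : V} (hw : G.Reachable u v) :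
    G.degree u = G.degree v := by
  obtain ⟨w⟩ := hw
  induction w with
  | nil => rfl
  | cons hadj _ ih => exact (h _ _ hadj).trans ih

lemma exists_boundary {G : SimpleGraph V} (x : V → ℝ) {u v : V} (w : G.Walk u v)
    (hu : x u ≠ 0) (hv : x v = 0) :
    ∃ a b, G.Adj a b ∧ x a ≠ 0 ∧ x b = 0 := by
  induction w with
  | nil => exact absurd hv hu
  | @cons s t _ hadj w' ih =>
    by_cases ht : x t = 0
    · exact ⟨s, t, hadj, hu, ht⟩
    · exact ih ht hv

end Aux


section Aux2

variable {p : ℝ} {V : Type*}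

lemma unitSphere_nonempty [Fintype V] [Nonempty V] (hp : 0 < p) :
    ∃ x : V → ℝ, unitSphere p x := by
  obtain ⟨v₀⟩ := ‹Nonempty V›
  classical
  refine ⟨fun i => if i = v₀ then 1 else 0, ?_⟩
  unfold unitSphere
  rw [Finset.sum_eq_single v₀]
  · simp [Real.one_rpow]
  · intro b _ hb
    simp [hb, Real.zero_rpow hp.ne']
  · simp

lemma continuous_Qp [Fintype V] (G : SimpleGraph V) [Fintype G.edgeSet] (hp : 0 ≤ p) :
    Continuous (Qp G p) := by
  unfold Qp
  apply continuous_finset_sum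
  intro e _
  induction e with
  | _ i j =>
    simp only [Sym2.lift_mk]
    exact (((continuous_apply i).add (continuous_apply j)).abs).rpow_const
      (fun x => Or.inr hp)

lemma sphere_isCompact [Fintype V] (hp : 0 < p) :
    IsCompact {x : V → ℝ | unitSphere p x} := by
  have hcont : Continuous (fun x : V → ℝ => ∑ i, |x i| ^ p) :=
    continuous_finset_sum _ fun i _ =>
      ((continuous_apply i).abs).rpow_const (fun x => Or.inr hp.le)
  apply Metric.isCompact_of_isClosed_isBounded
  · exact isClosed_eq hcont continuous_const
  · apply (Metric.isBounded_closedBall (x := (0 : V → ℝ)) (r := 1)).subset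
    intro x hx
    simp only [Metric.mem_closedBall, dist_zero_right]
    rw [pi_norm_le_iff_of_nonneg (by norm_num)]
    intro i
    have h1 : |x i| ^ p ≤ 1 := by
      have := Finset.single_le_sum (f := fun i => |x i| ^ p)
        (fun j _ => Real.rpow_nonneg (abs_nonneg _) p) (Finset.mem_univ i)
      rw [hx] at this
      exact this
    rw [Real.norm_eq_abs]
    by_contra hgt
    push_neg at hgt
    have : 1 < |x i| ^ p := by
      rw [Real.one_lt_rpow_iff (abs_nonneg _)]
      exact Or.inl ⟨hgt, hp⟩
    linarith

lemma exists_max [Fintype V] (G : SimpleGraph V) [Fintype G.edgeSet] [Nonempty V]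
    (hp : 0 < p) :
    ∃ x : V → ℝ, unitSphere p x ∧ lamp G p = Qp G p x ∧
      ∀ y, unitSphere p y → Qp G p y ≤ Qp G p x := by
  obtain ⟨x₀, hx₀, hmax⟩ := (sphere_isCompact hp).exists_isMaxOn
    (by obtain ⟨x, hx⟩ := unitSphere_nonempty (V := V) hp; exact ⟨x, hx⟩)
    ((continuous_Qp G hp.le).continuousOn)
  have hQnonneg : 0 ≤ Qp G p x₀ := by
    apply Finset.sum_nonneg
    intro e _
    induction e with
    | _ i j => simp only [Sym2.lift_mk]; positivity
  refine ⟨x₀, hx₀, ?_, fun y hy => hmax hy⟩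
  apply le_antisymm
  · apply Real.sSup_le _ hQnonneg
    rintro r ⟨y, hy, rfl⟩
    exact hmax hy
  · apply le_csSup
    · exact ⟨Qp G p x₀, by rintro r ⟨y, hy, rfl⟩; exact hmax hy⟩
    · exact ⟨x₀, hx₀, rfl⟩

end Aux2


section Aux3

variable {p : ℝ} {V : Type*} [Fintype V] [DecidableEq V]
variable (G : SimpleGraph V) [DecidableRel G.Adj]

/-- the comparison function -/
noncomputable def Bfun (M : ℝ) (x : V → ℝ) : Sym2 V → ℝ :=
  Sym2.lift ⟨fun i j => (2:ℝ)^(p-1) * M * (|x i| ^ p / (G.degree i : ℝ))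
      + (2:ℝ)^(p-1) * M * (|x j| ^ p / (G.degree j : ℝ)), fun i j => by simp [add_comm]⟩

lemma sum_Bfun (hc : G.Connected) (hE' : ∃ a b, G.Adj a b) (hp : 1 < p) (M : ℝ)
    (x : V → ℝ) (hx : unitSphere p x) :
    ∑ e ∈ G.edgeFinset, Bfun (p := p) G M x e = (2:ℝ)^(p-1) * M := by
  unfold Bfun
  rw [sum_edge_lift G (fun v => (2:ℝ)^(p-1) * M * (|x v| ^ p / (G.degree v : ℝ)))]
  have : ∀ v : V, (G.degree v : ℝ) * ((2:ℝ)^(p-1) * M * (|x v| ^ p / (G.degree v : ℝ)))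
      = (2:ℝ)^(p-1) * M * |x v| ^ p := by
    intro v
    have hd : (0:ℝ) < (G.degree v : ℝ) := by
      exact_mod_cast deg_pos G hc hE' v
    field_simp
  rw [Finset.sum_congr rfl (fun v _ => this v), ← Finset.mul_sum]
  have hx' : ∑ v, |x v| ^ p = 1 := hx
  rw [hx', mul_one]

lemma per_edge_le (hc : G.Connected) (hE' : ∃ a b, G.Adj a b) (hp : 1 < p) {M : ℝ}
    (hM : ∀ i j, G.Adj i j →
      (((G.degree i : ℝ) ^ (p/(p-1)) + (G.degree j : ℝ) ^ (p/(p-1)))/2) ^ ((p-1)/p) ≤ M)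
    (x : V → ℝ) :
    ∀ e ∈ G.edgeFinset,
      Sym2.lift ⟨fun i j => |x i + x j| ^ p, fun i j => by simp [add_comm]⟩ e
        ≤ Bfun (p := p) G M x e := by
  intro e he
  induction e with
  | _ i j =>
    rw [SimpleGraph.mem_edgeFinset, SimpleGraph.mem_edgeSet] at he
    have hdi : (0:ℝ) < (G.degree i : ℝ) := by exact_mod_cast deg_pos G hc hE' i
    have hdj : (0:ℝ) < (G.degree j : ℝ) := by exact_mod_cast deg_pos G hc hE' j
    simp only [Bfun, Sym2.lift_mk]
    calc |x i + x j| ^ p ≤ (|x i| + |x j|) ^ p :=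
          Real.rpow_le_rpow (abs_nonneg _) (abs_add_le _ _) (by linarith)
      _ ≤ (2:ℝ)^(p-1) * M * (|x i| ^ p / (G.degree i : ℝ) + |x j| ^ p / (G.degree j : ℝ)) :=
          edge_bound hp (abs_nonneg _) (abs_nonneg _) hdi hdj (hM i j he)
      _ = _ := by ring

lemma Qp_le_bound (hc : G.Connected) (hE' : ∃ a b, G.Adj a b) (hp : 1 < p) {M : ℝ}
    (hM : ∀ i j, G.Adj i j →
      (((G.degree i : ℝ) ^ (p/(p-1)) + (G.degree j : ℝ) ^ (p/(p-1)))/2) ^ ((p-1)/p) ≤ M)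
    (x : V → ℝ) (hx : unitSphere p x) :
    Qp G p x ≤ (2:ℝ)^(p-1) * M := by
  calc Qp G p x ≤ ∑ e ∈ G.edgeFinset, Bfun (p := p) G M x e :=
        Finset.sum_le_sum (per_edge_le G hc hE' hp hM x)
    _ = _ := sum_Bfun G hc hE' hp M x hx

lemma Qp_lt_bound (hc : G.Connected) (hE' : ∃ a b, G.Adj a b) (hp : 1 < p) {M : ℝ}
    (hM : ∀ i j, G.Adj i j →
      (((G.degree i : ℝ) ^ (p/(p-1)) + (G.degree j : ℝ) ^ (p/(p-1)))/2) ^ ((p-1)/p) ≤ M)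
    (hbad : ∃ i j, G.Adj i j ∧ G.degree i ≠ G.degree j)
    (x : V → ℝ) (hx : unitSphere p x) :
    Qp G p x < (2:ℝ)^(p-1) * M := by
  have hp0 : (0:ℝ) < p := by linarith
  have key : ∃ e₀ ∈ G.edgeFinset,
      Sym2.lift ⟨fun i j => |x i + x j| ^ p, fun i j => by simp [add_comm]⟩ e₀
        < Bfun (p := p) G M x e₀ := by
    by_cases hzero : ∃ v, x v = 0
    · obtain ⟨v, hv⟩ := hzero
      have hsupp : ∃ u, x u ≠ 0 := by
        by_contra hall
        push_neg at hall
        have : ∑ i, |x i| ^ p = 0 := by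
          apply Finset.sum_eq_zero
          intro i _
          rw [hall i, abs_zero, Real.zero_rpow hp0.ne']
        rw [hx] at this; norm_num at this
      obtain ⟨u, hu⟩ := hsupp
      obtain ⟨w⟩ := hc.preconnected u v
      obtain ⟨k, l, hkl, hk, hl⟩ := exists_boundary x w hu hv
      refine ⟨s(k, l), by rwa [SimpleGraph.mem_edgeFinset, SimpleGraph.mem_edgeSet], ?_⟩
      have hdk : (0:ℝ) < (G.degree k : ℝ) := by exact_mod_cast deg_pos G hc hE' k
      have hdl : (0:ℝ) < (G.degree l : ℝ) := by exact_mod_cast deg_pos G hc hE' l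
      have hMlk := hM l k hkl.symm
      have hstrict := edge_bound_strict_zero hp (abs_pos.2 hk) hdl hdk hMlk
      simp only [Bfun, Sym2.lift_mk]
      rw [hl] at *
      have e0 : |(0:ℝ)| ^ p = (0:ℝ) ^ p := by rw [abs_zero]
      calc |x k + 0| ^ p = ((0:ℝ) + |x k|) ^ p := by rw [add_zero, zero_add]
        _ < (2:ℝ)^(p-1) * M * ((0:ℝ) ^ p / (G.degree l : ℝ) + |x k| ^ p / (G.degree k : ℝ)) :=
            hstrict
        _ = _ := by rw [← e0, abs_zero]; ring
    · push_neg at hzero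
      obtain ⟨i, j, hadj, hne⟩ := hbad
      refine ⟨s(i, j), by rwa [SimpleGraph.mem_edgeFinset, SimpleGraph.mem_edgeSet], ?_⟩
      have hdi : (0:ℝ) < (G.degree i : ℝ) := by exact_mod_cast deg_pos G hc hE' i
      have hdj : (0:ℝ) < (G.degree j : ℝ) := by exact_mod_cast deg_pos G hc hE' j
      have hcd : (G.degree i : ℝ) ≠ (G.degree j : ℝ) := by exact_mod_cast hne
      simp only [Bfun, Sym2.lift_mk]
      calc |x i + x j| ^ p ≤ (|x i| + |x j|) ^ p :=
            Real.rpow_le_rpow (abs_nonneg _) (abs_add_le _ _) hp0.le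
        _ < (2:ℝ)^(p-1) * M * (|x i| ^ p / (G.degree i : ℝ) + |x j| ^ p / (G.degree j : ℝ)) :=
            edge_bound_strict_ne hp (abs_pos.2 (hzero i)) (abs_nonneg _) hdi hdj hcd
              (hM i j hadj)
        _ = _ := by ring
  calc Qp G p x < ∑ e ∈ G.edgeFinset, Bfun (p := p) G M x e :=
        Finset.sum_lt_sum (per_edge_le G hc hE' hp hM x) key
    _ = _ := sum_Bfun G hc hE' hp M x hx

end Aux3

theorem stmt_17 [Fintype V] [DecidableEq V] (G : SimpleGraph V) [DecidableRel G.Adj]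
    (hc : G.Connected) (hE : G.edgeFinset.Nonempty) (p : ℝ) (hp : 1 < p) :
    lamp G p ≤ (2 : ℝ) ^ (p - 1) *
        G.edgeFinset.sup' hE (fun e =>
          Sym2.lift ⟨fun i j =>
            (((G.degree i : ℝ) ^ (p / (p - 1)) + (G.degree j : ℝ) ^ (p / (p - 1))) / 2)
              ^ ((p - 1) / p), fun i j => by simp [add_comm]⟩ e) ∧
    (lamp G p = (2 : ℝ) ^ (p - 1) *
        G.edgeFinset.sup' hE (fun e =>
          Sym2.lift ⟨fun i j =>
            (((G.degree i : ℝ) ^ (p / (p - 1)) + (G.degree j : ℝ) ^ (p / (p - 1))) / 2)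
              ^ ((p - 1) / p), fun i j => by simp [add_comm]⟩ e) ↔
      ∃ d, G.IsRegularOfDegree d) := by
  classical
  have hNE : Nonempty V := hc.nonempty
  have hp0 : (0:ℝ) < p := by linarith
  have hp1 : p - 1 ≠ 0 := by intro h; have : p = 1 := by linarith
                             exact absurd this (by linarith)
  have hE' : ∃ a b, G.Adj a b := by
    obtain ⟨e₀, he₀⟩ := hE
    induction e₀ with
    | _ a b =>
      rw [SimpleGraph.mem_edgeFinset, SimpleGraph.mem_edgeSet] at he₀
      exact ⟨a, b, he₀⟩
  set M := G.edgeFinset.sup' hE (fun e =>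
          Sym2.lift ⟨fun i j =>
            (((G.degree i : ℝ) ^ (p / (p - 1)) + (G.degree j : ℝ) ^ (p / (p - 1))) / 2)
              ^ ((p - 1) / p), fun i j => by simp [add_comm]⟩ e) with hMdef
  have hM : ∀ i j, G.Adj i j →
      (((G.degree i : ℝ) ^ (p/(p-1)) + (G.degree j : ℝ) ^ (p/(p-1)))/2) ^ ((p-1)/p) ≤ M := by
    intro i j hadj
    have he : s(i, j) ∈ G.edgeFinset := by
      rwa [SimpleGraph.mem_edgeFinset, SimpleGraph.mem_edgeSet]
    have := Finset.le_sup' (f := fun e =>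
          Sym2.lift ⟨fun i j =>
            (((G.degree i : ℝ) ^ (p / (p - 1)) + (G.degree j : ℝ) ^ (p / (p - 1))) / 2)
              ^ ((p - 1) / p), fun i j => by simp [add_comm]⟩ e) he
    simpa only [Sym2.lift_mk] using this
  have hM0 : 0 ≤ M := by
    obtain ⟨a, b, hab⟩ := hE'
    refine le_trans ?_ (hM a b hab)
    positivity
  have h2p : (0:ℝ) < (2:ℝ)^(p-1) := Real.rpow_pos_of_pos (by norm_num) _
  have hub : ∀ r ∈ {r | ∃ x : V → ℝ, unitSphere p x ∧ Qp G p x = r}, r ≤ (2:ℝ)^(p-1) * M := by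
    rintro r ⟨x, hx, rfl⟩
    exact Qp_le_bound G hc hE' hp hM x hx
  have part1 : lamp G p ≤ (2:ℝ)^(p-1) * M :=
    Real.sSup_le hub (mul_nonneg h2p.le hM0)
  refine ⟨part1, ?_, ?_⟩
  · -- equality → regular
    intro heq
    by_contra hirr
    have hbad : ∃ i j, G.Adj i j ∧ G.degree i ≠ G.degree j := by
      by_contra hall
      push_neg at hall
      refine hirr ⟨G.degree (Classical.arbitrary V), fun v => ?_⟩
      exact degree_constant G (fun u w h => hall u w h) (hc.preconnected v _)
    obtain ⟨x₀, hx₀, hlam, _⟩ := exists_max G hp0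
    have hlt := Qp_lt_bound G hc hE' hp hM hbad x₀ hx₀
    rw [← hlam] at hlt
    rw [heq] at hlt
    exact absurd hlt (lt_irrefl _)
  · -- regular → equality
    rintro ⟨d, hreg⟩
    have hd : ∀ v : V, G.degree v = d := hreg
    have hfval : ∀ e ∈ G.edgeFinset, (fun e =>
          Sym2.lift ⟨fun i j =>
            (((G.degree i : ℝ) ^ (p / (p - 1)) + (G.degree j : ℝ) ^ (p / (p - 1))) / 2)
              ^ ((p - 1) / p), fun i j => by simp [add_comm]⟩ e) e = (d : ℝ) := by
      intro e _
      induction e with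
      | _ i j =>
        simp only [Sym2.lift_mk, hd]
        have : (((d:ℝ) ^ (p/(p-1)) + (d:ℝ) ^ (p/(p-1)))/2) = (d:ℝ) ^ (p/(p-1)) := by ring
        rw [this, ← Real.rpow_mul (by positivity)]
        rw [show p/(p-1) * ((p-1)/p) = 1 by field_simp]
        exact Real.rpow_one _
    have hMd : M = (d : ℝ) := by
      rw [hMdef, Finset.sup'_congr hE rfl hfval, Finset.sup'_const]
    -- lower bound via constant vector
    set n : ℝ := (Fintype.card V : ℝ) with hn
    have hnpos : (0:ℝ) < n := by
      rw [hn]; exact_mod_cast Fintype.card_pos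
    set c : ℝ := n ^ (-(1/p)) with hcdef
    have hcpos : 0 < c := Real.rpow_pos_of_pos hnpos _
    have hcp : c ^ p = n⁻¹ := by
      rw [hcdef, ← Real.rpow_mul hnpos.le]
      rw [show -(1/p)*p = -1 by field_simp]
      rw [Real.rpow_neg hnpos.le, Real.rpow_one]
    have hxunit : unitSphere p (fun _ : V => c) := by
      unfold unitSphere
      rw [Finset.sum_const, Finset.card_univ, abs_of_pos hcpos, hcp, nsmul_eq_mul, ← hn]
      field_simp
    have hhand : n * (d:ℝ) = 2 * (G.edgeFinset.card : ℝ) := by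
      have h := G.sum_degrees_eq_twice_card_edges
      have h2 : ∑ v : V, G.degree v = Fintype.card V * d := by
        rw [Finset.sum_congr rfl (fun v _ => hd v), Finset.sum_const, Finset.card_univ,
          smul_eq_mul]
      rw [h2] at h
      rw [hn]
      exact_mod_cast h
    have hQc : Qp G p (fun _ : V => c) = (2:ℝ)^(p-1) * (d:ℝ) := by
      unfold Qp
      have hterm : ∀ e ∈ G.edgeFinset,
          Sym2.lift ⟨fun i j => |(fun _ : V => c) i + (fun _ : V => c) j| ^ p,
            fun i j => by simp [add_comm]⟩ e = (2:ℝ)^p * n⁻¹ := by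
        intro e _
        induction e with
        | _ i j =>
          simp only [Sym2.lift_mk]
          rw [show c + c = 2 * c by ring, abs_of_pos (by linarith), Real.mul_rpow
            (by norm_num) hcpos.le, hcp]
      rw [Finset.sum_congr rfl hterm, Finset.sum_const, nsmul_eq_mul]
      have h2 : (2:ℝ)^p = (2:ℝ)^(p-1) * 2 := by
        rw [← Real.rpow_add_one (by norm_num : (2:ℝ) ≠ 0)]
        ring_nf
      have hcard : (G.edgeFinset.card : ℝ) = n * (d:ℝ) / 2 := by linarith
      rw [hcard, h2]
      field_simp
    have hge : (2:ℝ)^(p-1) * (d:ℝ) ≤ lamp G p := by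
      rw [← hQc]
      exact le_csSup ⟨(2:ℝ)^(p-1) * M, hub⟩ ⟨_, hxunit, rfl⟩
    rw [hMd]
    rw [hMd] at part1
    linarith
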